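/- Let G = (V, E) be a special graph. Then for every n ≥ 1, G does not contain all finite subgraphs of the shift graph Sh_n(ℕ): there exists a finite set S of vertices of Sh_n(ℕ) such that there is no injective map f : S → V with the property that whenever s, t ∈ S are adjacent in Sh_n(ℕ), f(s) and f(t) are adjacent in G. -/

import Mathlib

open Cardinal

/-- `t` is the shift of `s`: `s_i = t_{i-1}` for all `1 ≤ i ≤ r-1`. -/
def IsShiftOf {A : Type} {r : ℕ} (s t : Fin r → A) : Prop :=
  ∀ (i : ℕ) (h : i + 1 < r), s ⟨i + 1, h⟩ = t ⟨i, Nat.lt_of_succ_lt h⟩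

/-- The shift graph `Sh_r(A)` on a linear order `A`: vertices are strictly increasing
`r`-tuples from `A`, and distinct vertices `s, t` are adjacent iff one is the shift
of the other. -/
def ShiftGraph (A : Type) [LinearOrder A] (r : ℕ) :
    SimpleGraph {s : Fin r → A // StrictMono s} where
  Adj s t := s ≠ t ∧ (IsShiftOf s.1 t.1 ∨ IsShiftOf t.1 s.1)
  symm := by
    constructor
    rintro s t ⟨hne, h⟩
    exact ⟨hne.symm, h.symm⟩
  loopless := by
    constructor
    rintro s ⟨hne, -⟩
    exact hne rfl

/-- The symmetric shift graph `Sh_r^sym(A)` on a set `A`: vertices are `r`-tuples of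
pairwise distinct elements of `A`, and distinct vertices `s, t` are adjacent iff one
is the shift of the other. -/
def SymShiftGraph (A : Type) (r : ℕ) :
    SimpleGraph {s : Fin r → A // Function.Injective s} where
  Adj s t := s ≠ t ∧ (IsShiftOf s.1 t.1 ∨ IsShiftOf t.1 s.1)
  symm := by
    constructor
    rintro s t ⟨hne, h⟩
    exact ⟨hne.symm, h.symm⟩
  loopless := by
    constructor
    rintro s ⟨hne, -⟩
    exact hne rfl
/-- A graph `G` is special if there is a (strict) partial order `≺` on its vertices such that
any two adjacent vertices are `≺`-comparable, and there is no circuit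
`x_0, …, x_{n-1}` (`n ≥ 3`, pairwise distinct, consecutive vertices adjacent, and `x_{n-1}`
adjacent to `x_0`) with `x_0 ≺ x_1 ≺ … ≺ x_m ≻ x_{m+1} ≻ … ≻ x_{n-1} ≻ x_0` for
some `0 < m < n - 1`. -/
def IsSpecialGraph {V : Type} (G : SimpleGraph V) : Prop :=
  ∃ lt : V → V → Prop,
    (∀ v : V, ¬ lt v v) ∧
    (∀ a b c : V, lt a b → lt b c → lt a c) ∧
    (∀ x y : V, G.Adj x y → lt x y ∨ lt y x) ∧
    ¬ ∃ (n : ℕ) (x : ℕ → V) (m : ℕ), 3 ≤ n ∧ 0 < m ∧ m < n - 1 ∧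
        (∀ i < n, ∀ j < n, x i = x j → i = j) ∧
        (∀ i : ℕ, i + 1 < n → G.Adj (x i) (x (i + 1))) ∧
        G.Adj (x (n - 1)) (x 0) ∧
        (∀ i < m, lt (x i) (x (i + 1))) ∧
        (∀ i : ℕ, m ≤ i → i + 1 < n → lt (x (i + 1)) (x i)) ∧
        lt (x 0) (x (n - 1))


def RamseyProp (r k M : ℕ) : Prop :=
  ∀ C : (Fin r → ℕ) → Bool, ∀ e : ℕ → ℕ, (∀ i j : ℕ, i < j → j < M → e i < e j) →
    ∃ c : Bool, ∃ sel : ℕ → ℕ,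
      (∀ i j : ℕ, i < j → j < k → sel i < sel j) ∧ (∀ i, i < k → sel i < M) ∧
      (∀ g : Fin r → ℕ, (∀ a b : Fin r, a < b → g a < g b) → (∀ a, g a < k) →
        C (fun a => e (sel (g a))) = c)

def PrehomProp (r j M : ℕ) : Prop :=
  ∀ C : (Fin (r+1) → ℕ) → Bool, ∀ e : ℕ → ℕ, (∀ i i' : ℕ, i < i' → i' < M → e i < e i') →
    ∃ c : ℕ → Bool, ∃ sel : ℕ → ℕ,
      (∀ i i' : ℕ, i < i' → i' < j → sel i < sel i') ∧ (∀ i, i < j → sel i < M) ∧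
      (∀ g : Fin (r+1) → ℕ, (∀ a b : Fin (r+1), a < b → g a < g b) → (∀ a, g a < j) →
        C (fun a => e (sel (g a))) = c (g 0))

lemma ramsey_zero (k : ℕ) : RamseyProp 0 k k := by
  intro C e _
  refine ⟨C (fun a => a.elim0), id, fun i j hij _ => hij, fun i hi => hi, ?_⟩
  intro g _ _
  congr 1
  funext a
  exact a.elim0

lemma prehom (r : ℕ) (IH : ∀ k, ∃ M, RamseyProp r k M) :
    ∀ j, ∃ M, PrehomProp r j M := by
  intro j
  induction j with
  | zero =>
    refine ⟨0, fun C e _ => ⟨fun _ => true, id, ?_, ?_, ?_⟩⟩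
    · intro i i' _ h; omega
    · intro i h; omega
    · intro g _ gb; exact absurd (gb 0) (by omega)
  | succ j ih =>
    obtain ⟨Mj, hMj⟩ := ih
    obtain ⟨Mr, hMr⟩ := IH Mj
    refine ⟨Mr + 1, ?_⟩
    intro C e he
    obtain ⟨c₀, sel₀, m₀, b₀, col₀⟩ :=
      hMr (fun t => C (Fin.cons (e 0) t)) (fun i => e (i + 1))
        (fun i i' h h' => he _ _ (by omega) (by omega))
    obtain ⟨c, sel₂, m₂, b₂, col₂⟩ :=
      hMj C (fun i => e (sel₀ i + 1))
        (fun i i' h h' => he _ _ (by have := m₀ i i' h h'; omega)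
          (by have := b₀ i' h'; omega))
    refine ⟨fun t => if t = 0 then c₀ else c (t - 1),
           fun i => if i = 0 then 0 else sel₀ (sel₂ (i - 1)) + 1, ?_, ?_, ?_⟩
    · intro i i' h h'
      beta_reduce
      rw [if_neg (by omega : ¬ i' = 0)]
      by_cases h0 : i = 0
      · rw [if_pos h0]; omega
      · rw [if_neg h0]
        have h1 : i - 1 < i' - 1 := by omega
        have h2 : i' - 1 < j := by omega
        have := m₀ _ _ (m₂ _ _ h1 h2) (b₂ _ h2)
        omega
    · intro i h
      beta_reduce
      by_cases h0 : i = 0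
      · rw [if_pos h0]; omega
      · rw [if_neg h0]
        have h2 : i - 1 < j := by omega
        have := b₀ _ (b₂ _ h2)
        omega
    · intro g gm gb
      by_cases h0 : g 0 = 0
      · have key : (fun a => e ((fun i => if i = 0 then 0 else sel₀ (sel₂ (i - 1)) + 1) (g a)))
            = Fin.cons (e 0) (fun b : Fin r => e (sel₀ (sel₂ (g b.succ - 1)) + 1)) := by
          funext a
          refine Fin.cases ?_ ?_ a
          · beta_reduce
            rw [Fin.cons_zero, h0, if_pos rfl]
          · intro b
            have hb1 : 1 ≤ g b.succ := by
              have := gm 0 b.succ (Fin.succ_pos b); omega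
            beta_reduce
            rw [Fin.cons_succ, if_neg (by omega : ¬ g b.succ = 0)]
        rw [key]
        have hmono : ∀ a b : Fin r, a < b → sel₂ (g a.succ - 1) < sel₂ (g b.succ - 1) := by
          intro a b hab
          have h1 := gm a.succ b.succ (Fin.succ_lt_succ_iff.mpr hab)
          have h2 : 1 ≤ g a.succ := by have := gm 0 a.succ (Fin.succ_pos a); omega
          have h3 := gb b.succ
          exact m₂ _ _ (by omega) (by omega)
        have hbd : ∀ a : Fin r, sel₂ (g a.succ - 1) < Mj := by
          intro a
          have h2 : 1 ≤ g a.succ := by have := gm 0 a.succ (Fin.succ_pos a); omega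
          have h3 := gb a.succ
          exact b₂ _ (by omega)
        have := col₀ (fun b : Fin r => sel₂ (g b.succ - 1)) hmono hbd
        rw [this]
        beta_reduce
        rw [if_pos h0]
      · have hall : ∀ a : Fin (r+1), 1 ≤ g a := by
          intro a
          rcases eq_or_ne a 0 with rfl | ha
          · omega
          · have := gm 0 a (Fin.pos_of_ne_zero ha); omega
        have key : (fun a => e ((fun i => if i = 0 then 0 else sel₀ (sel₂ (i - 1)) + 1) (g a)))
            = fun a => e (sel₀ (sel₂ (g a - 1)) + 1) := by
          funext a
          beta_reduce
          rw [if_neg (by have := hall a; omega : ¬ g a = 0)]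
        rw [key]
        have hmono : ∀ a b : Fin (r+1), a < b → g a - 1 < g b - 1 := by
          intro a b hab
          have := gm a b hab
          have := hall a
          omega
        have hbd : ∀ a : Fin (r+1), g a - 1 < j := by
          intro a
          have := gb a
          have := hall a
          omega
        have := col₂ (fun a => g a - 1) hmono hbd
        rw [this]
        beta_reduce
        rw [if_neg h0]

lemma ramsey_succ (r : ℕ) (IH : ∀ k, ∃ M, RamseyProp r k M) (k : ℕ) :
    ∃ M, RamseyProp (r+1) k M := by
  obtain ⟨M, hM⟩ := prehom r IH (2 * k)
  refine ⟨M, ?_⟩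
  intro C e he
  obtain ⟨c, sel, m, b, col⟩ := hM C e he
  have hpig : ∃ bb : Bool, ∃ U : Finset ℕ,
      U ⊆ Finset.range (2 * k) ∧ U.card = k ∧ ∀ t ∈ U, c t = bb := by
    by_cases hT : k ≤ ((Finset.range (2 * k)).filter (fun t => c t = true)).card
    · obtain ⟨U, hU, hUcard⟩ := Finset.exists_subset_card_eq hT
      exact ⟨true, U, fun x hx => (Finset.mem_filter.mp (hU hx)).1, hUcard,
        fun t ht => (Finset.mem_filter.mp (hU ht)).2⟩
    · have hsum := Finset.card_filter_add_card_filter_not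
        (s := Finset.range (2 * k)) (p := fun t => c t = true)
      rw [Finset.card_range] at hsum
      have hT' : k ≤ ((Finset.range (2 * k)).filter (fun t => ¬ c t = true)).card := by omega
      obtain ⟨U, hU, hUcard⟩ := Finset.exists_subset_card_eq hT'
      refine ⟨false, U, fun x hx => (Finset.mem_filter.mp (hU hx)).1, hUcard, ?_⟩
      intro t ht
      have := (Finset.mem_filter.mp (hU ht)).2
      revert this
      cases c t <;> simp
  obtain ⟨bb, U, hUsub, hUcard, hUval⟩ := hpig
  have umem : ∀ i : Fin k, (U.orderEmbOfFin hUcard i : ℕ) < 2 * k := by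
    intro i
    have := hUsub (U.orderEmbOfFin_mem hUcard i)
    exact Finset.mem_range.mp this
  refine ⟨bb, fun i => if h : i < k then sel (U.orderEmbOfFin hUcard ⟨i, h⟩) else 0, ?_, ?_, ?_⟩
  · intro i j hij hj
    beta_reduce
    rw [dif_pos (by omega : i < k), dif_pos hj]
    exact m _ _ ((U.orderEmbOfFin hUcard).strictMono (show (⟨i, by omega⟩ : Fin k) < ⟨j, hj⟩ from hij))
      (umem _)
  · intro i hi
    beta_reduce
    rw [dif_pos hi]
    exact b _ (umem _)
  · intro g gm gb
    have key : (fun a => e ((fun i => if h : i < k then sel (U.orderEmbOfFin hUcard ⟨i, h⟩) else 0) (g a)))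
        = fun a => e (sel (U.orderEmbOfFin hUcard ⟨g a, gb a⟩)) := by
      funext a
      beta_reduce
      rw [dif_pos (gb a)]
    rw [key]
    have := col (fun a => (U.orderEmbOfFin hUcard ⟨g a, gb a⟩ : ℕ))
      (fun a b hab => (U.orderEmbOfFin hUcard).strictMono
        (show (⟨g a, gb a⟩ : Fin k) < ⟨g b, gb b⟩ from gm a b hab))
      (fun a => umem _)
    rw [this]
    exact hUval _ (U.orderEmbOfFin_mem hUcard _)

lemma ramsey_main : ∀ r k, ∃ M, RamseyProp r k M := by
  intro r
  induction r with
  | zero => exact fun k => ⟨k, ramsey_zero k⟩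
  | succ r ih => exact ramsey_succ r ih


theorem stmt_5 (V : Type) (G : SimpleGraph V) (hG : IsSpecialGraph G)
    (n : ℕ) (hn : 1 ≤ n) :
    ∃ S : Finset {s : Fin n → ℕ // StrictMono s},
      ¬ ∃ f : {s : Fin n → ℕ // StrictMono s} → V,
        Set.InjOn f ↑S ∧
        ∀ s ∈ S, ∀ t ∈ S, (ShiftGraph ℕ n).Adj s t → G.Adj (f s) (f t) := by
  classical
  obtain ⟨lt, hirr, htrans, hcmp, hnoc⟩ := hG
  obtain ⟨N, hN⟩ := ramsey_main (n+1) (2*n+1)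
  have hidmono : StrictMono (fun i : Fin n => (i : ℕ)) := fun _ _ h => h
  let S : Finset {s : Fin n → ℕ // StrictMono s} :=
    Finset.image (fun u : Fin n → Fin N =>
      if h : StrictMono (fun i => ((u i : ℕ))) then ⟨fun i => (u i : ℕ), h⟩
      else ⟨fun i : Fin n => (i : ℕ), hidmono⟩) Finset.univ
  refine ⟨S, ?_⟩
  rintro ⟨f, finj, fadj⟩
  have hmemS : ∀ (s : Fin n → ℕ) (hs : StrictMono s), (∀ i, s i < N) →
      (⟨s, hs⟩ : {s : Fin n → ℕ // StrictMono s}) ∈ S := by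
    intro s hs hb
    refine Finset.mem_image.2 ⟨fun i => ⟨s i, hb i⟩, Finset.mem_univ _, ?_⟩
    have hcond : StrictMono (fun i : Fin n => ((⟨s i, hb i⟩ : Fin N) : ℕ)) := hs
    exact dif_pos hcond
  let v0 : V := f ⟨fun i : Fin n => (i : ℕ), hidmono⟩
  let fv : (Fin n → ℕ) → V := fun s => if h : StrictMono s then f ⟨s, h⟩ else v0
  have hfv_eq : ∀ (s : Fin n → ℕ) (hs : StrictMono s), fv s = f ⟨s, hs⟩ :=
    fun s hs => dif_pos hs
  have hInj : ∀ s t : Fin n → ℕ, ∀ (hs : StrictMono s) (ht : StrictMono t),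
      (∀ i, s i < N) → (∀ i, t i < N) → fv s = fv t → s = t := by
    intro s t hs ht hsb htb h
    rw [hfv_eq s hs, hfv_eq t ht] at h
    have := finj (Finset.mem_coe.mpr (hmemS s hs hsb)) (Finset.mem_coe.mpr (hmemS t ht htb)) h
    exact congrArg Subtype.val this
  have hAdj : ∀ s t : Fin n → ℕ, ∀ (hs : StrictMono s) (ht : StrictMono t),
      (∀ i, s i < N) → (∀ i, t i < N) → s ≠ t → IsShiftOf s t →
      G.Adj (fv s) (fv t) := by
    intro s t hs ht hsb htb hne hsh
    rw [hfv_eq s hs, hfv_eq t ht]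
    exact fadj _ (hmemS s hs hsb) _ (hmemS t ht htb)
      ⟨fun hh => hne (congrArg Subtype.val hh), Or.inl hsh⟩
  let C : (Fin (n+1) → ℕ) → Bool := fun a =>
    if lt (fv (fun i : Fin n => a i.castSucc)) (fv (fun i : Fin n => a i.succ)) then true
    else false
  obtain ⟨c, HH, Hmono, Hbd, Hcol⟩ := hN C id (fun i j h _ => h)
  have Hcol' : ∀ g : Fin (n+1) → ℕ, (∀ a b : Fin (n+1), a < b → g a < g b) →
      (∀ a, g a < 2*n+1) → C (fun a => HH (g a)) = c := by
    intro g h1 h2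
    have := Hcol g h1 h2
    simpa using this
  have hC1 : ∀ a : Fin (n+1) → ℕ, C a = true →
      lt (fv (fun i : Fin n => a i.castSucc)) (fv (fun i : Fin n => a i.succ)) := by
    intro a h
    have hrfl : C a = if lt (fv (fun i : Fin n => a i.castSucc))
        (fv (fun i : Fin n => a i.succ)) then true else false := rfl
    rw [hrfl] at h
    by_contra hlt
    rw [if_neg hlt] at h
    exact Bool.noConfusion h
  have hC2 : ∀ a : Fin (n+1) → ℕ, C a = false →
      ¬ lt (fv (fun i : Fin n => a i.castSucc)) (fv (fun i : Fin n => a i.succ)) := by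
    intro a h
    have hrfl : C a = if lt (fv (fun i : Fin n => a i.castSucc))
        (fv (fun i : Fin n => a i.succ)) then true else false := rfl
    rw [hrfl] at h
    intro hlt
    rw [if_pos hlt] at h
    exact Bool.noConfusion h
  have Hinj : ∀ a b, a < 2*n+1 → b < 2*n+1 → HH a = HH b → a = b := by
    intro a b ha hb h
    rcases lt_trichotomy a b with h' | h' | h'
    · exact absurd h (Nat.ne_of_lt (Hmono _ _ h' hb))
    · exact h'
    · exact absurd h.symm (Nat.ne_of_lt (Hmono _ _ h' ha))
  let em : ℕ → ℕ := fun t => if t < n then t else t + 1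
  have em_mono : ∀ t t', t < t' → em t < em t' := by
    intro t t' h
    show (if t < n then t else t + 1) < (if t' < n then t' else t' + 1)
    split_ifs <;> omega
  have em_lt : ∀ t, t < 2*n → em t < 2*n+1 := by
    intro t h
    show (if t < n then t else t + 1) < 2*n+1
    split_ifs <;> omega
  have em_ne : ∀ t, em t ≠ n := by
    intro t
    show (if t < n then t else t + 1) ≠ n
    split_ifs <;> omega
  let X : ℕ → Fin n → ℕ := fun j i => HH (em (j + (i : ℕ)))
  let Y : ℕ → Fin n → ℕ := fun j i => HH (j + (i : ℕ))
  have hYmono : ∀ j, j ≤ n+1 → StrictMono (Y j) := by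
    intro j hj a b hab
    have h' : (a : ℕ) < (b : ℕ) := hab
    have hb := b.isLt
    exact Hmono _ _ (by omega) (by omega)
  have hXmono : ∀ j, j ≤ n → StrictMono (X j) := by
    intro j hj a b hab
    have h' : (a : ℕ) < (b : ℕ) := hab
    have hb := b.isLt
    exact Hmono _ _ (em_mono _ _ (by omega)) (em_lt _ (by omega))
  have hYbd : ∀ j, j ≤ n+1 → ∀ i : Fin n, Y j i < N := by
    intro j hj i
    have := i.isLt
    exact Hbd _ (by omega)
  have hXbd : ∀ j, j ≤ n → ∀ i : Fin n, X j i < N := by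
    intro j hj i
    have := i.isLt
    exact Hbd _ (em_lt _ (by omega))
  have hshY : ∀ j : ℕ, IsShiftOf (Y j) (Y (j+1)) := by
    intro j i hi
    show HH (j + (i + 1)) = HH ((j + 1) + i)
    congr 1
    omega
  have hshX : ∀ j : ℕ, IsShiftOf (X j) (X (j+1)) := by
    intro j i hi
    show HH (em (j + (i + 1))) = HH (em ((j + 1) + i))
    congr 2
    omega
  have hYne : ∀ j, j ≤ n → Y j ≠ Y (j+1) := by
    intro j hj h
    have h0 : HH (j + 0) = HH ((j+1) + 0) := congrFun h ⟨0, by omega⟩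
    have := Hinj _ _ (by omega) (by omega) h0
    omega
  have hXne : ∀ j, j + 1 ≤ n → X j ≠ X (j+1) := by
    intro j hj h
    have h0 : HH (em (j + 0)) = HH (em ((j+1) + 0)) := congrFun h ⟨0, by omega⟩
    have h1 := Hinj _ _ (em_lt _ (by omega)) (em_lt _ (by omega)) h0
    have := em_mono (j + 0) ((j+1) + 0) (by omega)
    omega
  have hXinj : ∀ a b, a ≤ n → b ≤ n → X a = X b → a = b := by
    intro a b ha hb h
    have h0 : HH (em (a + 0)) = HH (em (b + 0)) := congrFun h ⟨0, by omega⟩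
    have h1 := Hinj _ _ (em_lt _ (by omega)) (em_lt _ (by omega)) h0
    rcases lt_trichotomy (a + 0) (b + 0) with h' | h' | h'
    · have := em_mono _ _ h'; omega
    · omega
    · have := em_mono _ _ h'; omega
  have hYinj : ∀ a b, a ≤ n+1 → b ≤ n+1 → Y a = Y b → a = b := by
    intro a b ha hb h
    have h0 : HH (a + 0) = HH (b + 0) := congrFun h ⟨0, by omega⟩
    have := Hinj _ _ (by omega) (by omega) h0
    omega
  have hXYne : ∀ a b, a ≤ n → 1 ≤ b → b ≤ n → X a ≠ Y b := by
    intro a b ha hb1 hb h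
    have h0 : HH (em (a + (n - b))) = HH (b + (n - b)) := congrFun h ⟨n - b, by omega⟩
    have h2 := Hinj _ _ (em_lt _ (by omega)) (by omega) h0
    have := em_ne (a + (n - b))
    omega
  have hXY0 : X 0 = Y 0 := by
    funext i
    show HH (em (0 + (i : ℕ))) = HH (0 + (i : ℕ))
    congr 1
    have := i.isLt
    show (if 0 + (i:ℕ) < n then 0 + (i:ℕ) else 0 + (i:ℕ) + 1) = 0 + (i:ℕ)
    rw [if_pos (by omega)]
  have hXYn : X n = Y (n+1) := by
    funext i
    show HH (em (n + (i : ℕ))) = HH ((n+1) + (i : ℕ))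
    congr 1
    show (if n + (i:ℕ) < n then n + (i:ℕ) else n + (i:ℕ) + 1) = (n+1) + (i:ℕ)
    rw [if_neg (by omega)]
    omega
  have hGadjY : ∀ j, j + 1 ≤ n + 1 → G.Adj (fv (Y j)) (fv (Y (j+1))) := by
    intro j hj
    exact hAdj _ _ (hYmono j (by omega)) (hYmono (j+1) hj) (hYbd j (by omega))
      (hYbd (j+1) hj) (hYne j (by omega)) (hshY j)
  have hGadjX : ∀ j, j + 1 ≤ n → G.Adj (fv (X j)) (fv (X (j+1))) := by
    intro j hj
    exact hAdj _ _ (hXmono j (by omega)) (hXmono (j+1) hj) (hXbd j (by omega))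
      (hXbd (j+1) hj) (hXne j hj) (hshX j)
  have hCY : ∀ j, j ≤ n → (c = true → lt (fv (Y j)) (fv (Y (j+1)))) ∧
      (c = false → lt (fv (Y (j+1))) (fv (Y j))) := by
    intro j hj
    have h1 := Hcol' (fun a : Fin (n+1) => j + (a : ℕ))
      (fun a b hab => by
        show j + (a:ℕ) < j + (b:ℕ)
        have h' : (a:ℕ) < (b:ℕ) := hab
        omega)
      (fun a => by
        show j + (a:ℕ) < 2*n+1
        have := a.isLt
        omega)
    beta_reduce at h1
    have e1 : Y (j+1) = (fun i : Fin n => HH (j + ((i : ℕ) + 1))) := by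
      funext i
      show HH ((j+1) + (i : ℕ)) = HH (j + ((i : ℕ) + 1))
      congr 1
      omega
    constructor
    · intro hc
      rw [hc] at h1
      have h2 := hC1 (fun a : Fin (n+1) => HH (j + (a : ℕ))) h1
      rw [e1]
      exact h2
    · intro hc
      rw [hc] at h1
      have h2 := hC2 (fun a : Fin (n+1) => HH (j + (a : ℕ))) h1
      have hadj := hGadjY j (by omega)
      rcases hcmp _ _ hadj with h' | h'
      · exfalso
        apply h2
        rw [e1] at h'
        exact h'
      · exact h'
  have hCX : ∀ j, j + 1 ≤ n → (c = true → lt (fv (X j)) (fv (X (j+1)))) ∧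
      (c = false → lt (fv (X (j+1))) (fv (X j))) := by
    intro j hj
    have h1 := Hcol' (fun a : Fin (n+1) => em (j + (a : ℕ)))
      (fun a b hab => by
        show em (j + (a:ℕ)) < em (j + (b:ℕ))
        have h' : (a:ℕ) < (b:ℕ) := hab
        exact em_mono _ _ (by omega))
      (fun a => by
        show em (j + (a:ℕ)) < 2*n+1
        have := a.isLt
        exact em_lt _ (by omega))
    beta_reduce at h1
    have e1 : X (j+1) = (fun i : Fin n => HH (em (j + ((i : ℕ) + 1)))) := by
      funext i
      show HH (em ((j+1) + (i : ℕ))) = HH (em (j + ((i : ℕ) + 1)))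
      congr 2
      omega
    constructor
    · intro hc
      rw [hc] at h1
      have h2 := hC1 (fun a : Fin (n+1) => HH (em (j + (a : ℕ)))) h1
      rw [e1]
      exact h2
    · intro hc
      rw [hc] at h1
      have h2 := hC2 (fun a : Fin (n+1) => HH (em (j + (a : ℕ)))) h1
      have hadj := hGadjX j hj
      rcases hcmp _ _ hadj with h' | h'
      · exfalso
        apply h2
        rw [e1] at h'
        exact h'
      · exact h'
  cases c with
  | true =>
    let W : ℕ → Fin n → ℕ := fun j => if j ≤ n then X j else Y (2*n+1-j)
    have hWle : ∀ i, i ≤ n → W i = X i := fun i h => if_pos h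
    have hWgt : ∀ i, n < i → W i = Y (2*n+1-i) := fun i h => if_neg (by omega)
    have hWprop : ∀ i, i < 2*n+1 → StrictMono (W i) ∧ (∀ t, W i t < N) := by
      intro i hi
      by_cases h : i ≤ n
      · rw [hWle i h]; exact ⟨hXmono i h, hXbd i h⟩
      · rw [hWgt i (by omega)]
        exact ⟨hYmono _ (by omega), hYbd _ (by omega)⟩
    refine hnoc ⟨2*n+1, fun i => fv (W i), n, by omega, by omega, by omega,
      ?_, ?_, ?_, ?_, ?_, ?_⟩
    · intro i hi j hj h
      beta_reduce at h
      have hWij : W i = W j :=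
        hInj _ _ (hWprop i hi).1 (hWprop j hj).1 (hWprop i hi).2 (hWprop j hj).2 h
      by_cases h1 : i ≤ n <;> by_cases h2 : j ≤ n
      · rw [hWle i h1, hWle j h2] at hWij
        exact hXinj _ _ h1 h2 hWij
      · rw [hWle i h1, hWgt j (by omega)] at hWij
        exact absurd hWij (hXYne _ _ h1 (by omega) (by omega))
      · rw [hWgt i (by omega), hWle j h2] at hWij
        exact absurd hWij.symm (hXYne _ _ h2 (by omega) (by omega))
      · rw [hWgt i (by omega), hWgt j (by omega)] at hWij
        have := hYinj _ _ (by omega) (by omega) hWij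
        omega
    · intro i hi
      beta_reduce
      rcases lt_trichotomy i n with h | h | h
      · rw [hWle i (by omega), hWle (i+1) (by omega)]
        exact hGadjX i (by omega)
      · rw [hWle i (by omega), hWgt (i+1) (by omega)]
        have e0 : X i = X n := by rw [h]
        have e : 2*n+1-(i+1) = n := by omega
        rw [e, e0, hXYn]
        exact (hGadjY n (by omega)).symm
      · rw [hWgt i h, hWgt (i+1) (by omega)]
        have e1 : 2*n+1-i = (2*n-i)+1 := by omega
        have e2 : 2*n+1-(i+1) = 2*n-i := by omega
        rw [e1, e2]
        exact (hGadjY (2*n-i) (by omega)).symm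
    · beta_reduce
      have e : 2*n+1-1 = 2*n := by omega
      rw [e, hWgt (2*n) (by omega), hWle 0 (by omega), hXY0]
      have e2 : 2*n+1-2*n = 1 := by omega
      rw [e2]
      exact (hGadjY 0 (by omega)).symm
    · intro i hi
      beta_reduce
      rw [hWle i (by omega), hWle (i+1) (by omega)]
      exact (hCX i (by omega)).1 rfl
    · intro i h1 h2
      beta_reduce
      rcases eq_or_lt_of_le h1 with h | h
      · rw [hWle i (by omega), hWgt (i+1) (by omega)]
        have e0 : X i = X n := by rw [← h]
        have e : 2*n+1-(i+1) = n := by omega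
        rw [e, e0, hXYn]
        exact (hCY n le_rfl).1 rfl
      · rw [hWgt i h, hWgt (i+1) (by omega)]
        have e1 : 2*n+1-i = (2*n-i)+1 := by omega
        have e2 : 2*n+1-(i+1) = 2*n-i := by omega
        rw [e1, e2]
        exact (hCY (2*n-i) (by omega)).1 rfl
    · beta_reduce
      have e : 2*n+1-1 = 2*n := by omega
      rw [e, hWgt (2*n) (by omega), hWle 0 (by omega), hXY0]
      have e2 : 2*n+1-2*n = 1 := by omega
      rw [e2]
      exact (hCY 0 (by omega)).1 rfl
  | false =>
    let W : ℕ → Fin n → ℕ := fun j => if j ≤ n then X (n - j) else Y (j - n)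
    have hWle : ∀ i, i ≤ n → W i = X (n - i) := fun i h => if_pos h
    have hWgt : ∀ i, n < i → W i = Y (i - n) := fun i h => if_neg (by omega)
    have hWprop : ∀ i, i < 2*n+1 → StrictMono (W i) ∧ (∀ t, W i t < N) := by
      intro i hi
      by_cases h : i ≤ n
      · rw [hWle i h]; exact ⟨hXmono _ (by omega), hXbd _ (by omega)⟩
      · rw [hWgt i (by omega)]
        exact ⟨hYmono _ (by omega), hYbd _ (by omega)⟩
    refine hnoc ⟨2*n+1, fun i => fv (W i), n, by omega, by omega, by omega,
      ?_, ?_, ?_, ?_, ?_, ?_⟩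
    · intro i hi j hj h
      beta_reduce at h
      have hWij : W i = W j :=
        hInj _ _ (hWprop i hi).1 (hWprop j hj).1 (hWprop i hi).2 (hWprop j hj).2 h
      by_cases h1 : i ≤ n <;> by_cases h2 : j ≤ n
      · rw [hWle i h1, hWle j h2] at hWij
        have := hXinj _ _ (by omega) (by omega) hWij
        omega
      · rw [hWle i h1, hWgt j (by omega)] at hWij
        exact absurd hWij (hXYne _ _ (by omega) (by omega) (by omega))
      · rw [hWgt i (by omega), hWle j h2] at hWij
        exact absurd hWij.symm (hXYne _ _ (by omega) (by omega) (by omega))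
      · rw [hWgt i (by omega), hWgt j (by omega)] at hWij
        have := hYinj _ _ (by omega) (by omega) hWij
        omega
    · intro i hi
      beta_reduce
      rcases lt_trichotomy i n with h | h | h
      · rw [hWle i (by omega), hWle (i+1) (by omega)]
        have e : n - i = (n-i-1)+1 := by omega
        have e2 : n - (i+1) = n-i-1 := by omega
        rw [e, e2]
        exact (hGadjX (n-i-1) (by omega)).symm
      · rw [hWle i (by omega), hWgt (i+1) (by omega)]
        have e0 : n - i = 0 := by omega
        have e : i+1-n = 1 := by omega
        rw [e0, e, hXY0]
        exact hGadjY 0 (by omega)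
      · rw [hWgt i h, hWgt (i+1) (by omega)]
        have e : i+1-n = (i-n)+1 := by omega
        rw [e]
        exact hGadjY (i-n) (by omega)
    · beta_reduce
      have e : 2*n+1-1 = 2*n := by omega
      rw [e, hWgt (2*n) (by omega), hWle 0 (by omega), Nat.sub_zero, hXYn]
      have e2 : 2*n-n = n := by omega
      rw [e2]
      exact hGadjY n le_rfl
    · intro i hi
      beta_reduce
      rw [hWle i (by omega), hWle (i+1) (by omega)]
      have e : n - i = (n-i-1)+1 := by omega
      have e2 : n - (i+1) = n-i-1 := by omega
      rw [e, e2]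
      exact (hCX (n-i-1) (by omega)).2 rfl
    · intro i h1 h2
      beta_reduce
      rcases eq_or_lt_of_le h1 with h | h
      · rw [hWle i (by omega), hWgt (i+1) (by omega)]
        have e0 : n - i = 0 := by omega
        have e : i+1-n = 1 := by omega
        rw [e0, e, hXY0]
        exact (hCY 0 (by omega)).2 rfl
      · rw [hWgt i h, hWgt (i+1) (by omega)]
        have e : i+1-n = (i-n)+1 := by omega
        rw [e]
        exact (hCY (i-n) (by omega)).2 rfl
    · beta_reduce
      have e : 2*n+1-1 = 2*n := by omega
      rw [e, hWgt (2*n) (by omega), hWle 0 (by omega), Nat.sub_zero, hXYn]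
      have e2 : 2*n-n = n := by omega
      rw [e2]
      exact (hCY n le_rfl).2 rfl
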